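/- It is false that for every n-tuple of single-qubit Clifford operators C₁,…,Cₙ, the restriction of C₁⊗…⊗Cₙ to the symmetric subspace of (C²)^⊗n is an (n+1)-dimensional Clifford operator; a counterexample is n = 2 with C₁ = C₂ = H (the Hadamard gate). -/

import Mathlib

open Matrix

/-- The primitive `d`-th root of unity `ω = exp(2πi/d)`. -/
noncomputable def omega (d : ℕ) : ℂ := Complex.exp (2 * Real.pi * Complex.I / d)

/-- The generalized Pauli `X` (cyclic shift) matrix: `X e_s = e_{s+1 mod d}`. -/
def PauliX (d : ℕ) [NeZero d] : Matrix (Fin d) (Fin d) ℂ :=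
  Matrix.of fun i j => if i = j + 1 then 1 else 0

/-- The generalized Pauli `Z` (clock) matrix: `Z e_s = ω^s e_s`. -/
noncomputable def PauliZ (d : ℕ) [NeZero d] : Matrix (Fin d) (Fin d) ℂ :=
  Matrix.diagonal fun s => omega d ^ (s : ℕ)

/-- The generalized Pauli group on `C^d`, up to unit-modulus phases. -/
noncomputable def PauliSet (d : ℕ) [NeZero d] : Set (Matrix (Fin d) (Fin d) ℂ) :=
  {M | ∃ (a b : ℕ) (lam : ℂ), ‖lam‖ = 1 ∧ M = lam • (PauliX d ^ a * PauliZ d ^ b)}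

/-- A `d`-dimensional Clifford operator: a unitary mapping the generalized Pauli group
(up to phases) to itself under conjugation. -/
noncomputable def IsClifford (d : ℕ) [NeZero d] (U : Matrix (Fin d) (Fin d) ℂ) : Prop :=
  U ∈ Matrix.unitaryGroup (Fin d) ℂ ∧ ∀ M ∈ PauliSet d, U * M * Uᴴ ∈ PauliSet d

/-- The Hadamard gate `H = (1/√2)[[1,1],[1,-1]]`. -/
noncomputable def Had : Matrix (Fin 2) (Fin 2) ℂ :=
  ((Real.sqrt 2 : ℂ))⁻¹ • !![1, 1; 1, -1]

/-- Basis of the symmetric subspace of `C² ⊗ C²`: `|00⟩, (|01⟩+|10⟩)/√2, |11⟩`. -/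
noncomputable def symBasis : Fin 3 → (Fin 2 × Fin 2 → ℂ) :=
  ![Pi.single (0, 0) 1,
    ((Real.sqrt 2 : ℂ))⁻¹ • (Pi.single (0, 1) 1 + Pi.single (1, 0) 1),
    Pi.single (1, 1) 1]


section Aux

lemma sqrt2_ne : ((Real.sqrt 2 : ℝ) : ℂ) ≠ 0 := by norm_cast; positivity

lemma sqrt2_sq : ((Real.sqrt 2 : ℝ) : ℂ) * ((Real.sqrt 2 : ℝ) : ℂ) = 2 := by
  norm_cast; rw [Real.mul_self_sqrt (by norm_num)]

lemma omega2 : omega 2 = -1 := by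
  unfold omega
  rw [show (2 : ℂ) * Real.pi * Complex.I / (2:ℕ) = Real.pi * Complex.I by push_cast; ring]
  exact Complex.exp_pi_mul_I

lemma omega3_ne_one : omega 3 ≠ 1 := by
  unfold omega
  intro h
  rw [Complex.exp_eq_one_iff] at h
  obtain ⟨n, hn⟩ := h
  have hpi : (Real.pi : ℂ) ≠ 0 := by norm_cast; exact Real.pi_ne_zero
  have h3 : (3 : ℂ) * n = 1 := by
    have h2 : (2 : ℂ) * Real.pi * Complex.I ≠ 0 := by
      simp [hpi, Complex.I_ne_zero]
    field_simp at hn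
    exact_mod_cast hn.symm
  have : (3 : ℤ) * n = 1 := by exact_mod_cast h3
  omega

lemma omega3_cube : omega 3 ^ 3 = 1 := by
  unfold omega
  rw [← Complex.exp_nat_mul]
  rw [show (3:ℕ) * (2 * Real.pi * Complex.I / (3:ℕ)) = 2 * Real.pi * Complex.I by
    push_cast; ring]
  simpa using Complex.exp_int_mul_two_pi_mul_I 1

lemma omega3_ne_zero : omega 3 ≠ 0 := Complex.exp_ne_zero _

lemma omega3_sum : 1 + omega 3 + omega 3 ^ 2 = 0 := by
  have h : (omega 3 - 1) * (1 + omega 3 + omega 3 ^ 2) = 0 := by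
    linear_combination omega3_cube
  rcases mul_eq_zero.mp h with h | h
  · exact absurd (by linear_combination h) omega3_ne_one
  · exact h

lemma omega3_sq_ne_one : omega 3 ^ 2 ≠ 1 := by
  intro h
  apply omega3_ne_one
  calc omega 3 = omega 3 * omega 3 ^ 2 := by rw [h, mul_one]
    _ = 1 := by linear_combination omega3_cube

open Fin.NatCast in
lemma pauliX_pow (d : ℕ) [NeZero d] (a : ℕ) :
    PauliX d ^ a = Matrix.of fun i j => if i = j + (a : Fin d) then 1 else 0 := by
  induction a with
  | zero => ext i j; simp [Matrix.one_apply]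
  | succ a ih =>
    rw [pow_succ, ih]
    ext i j
    simp only [Matrix.mul_apply, Matrix.of_apply, PauliX]
    rw [Finset.sum_eq_single (j + 1)]
    · push_cast
      simp [add_assoc, add_comm (1 : Fin d)]
    · intro b _ hb; simp [hb]
    · intro h; exact absurd (Finset.mem_univ _) h

lemma pauliX2 : PauliX 2 = !![0, 1; 1, 0] := by
  ext i j; fin_cases i <;> fin_cases j <;> simp [PauliX]

lemma pauliZ2 : PauliZ 2 = !![1, 0; 0, -1] := by
  ext i j; fin_cases i <;> fin_cases j <;> simp [PauliZ, Matrix.diagonal, omega2]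

lemma hadH : Hadᴴ = Had := by
  ext i j; fin_cases i <;> fin_cases j <;> simp [Had, Complex.ext_iff]

lemma hadsq : Had * Had = 1 := by
  rw [Had, Matrix.smul_mul, Matrix.mul_smul, smul_smul]
  rw [show !![(1:ℂ), 1; 1, -1] * !![1, 1; 1, -1] = (2:ℂ) • 1 by
    ext i j; fin_cases i <;> fin_cases j <;>
      simp [Matrix.mul_apply, Fin.sum_univ_two, Matrix.one_apply] <;> norm_num]
  rw [smul_smul]
  rw [show (((Real.sqrt 2:ℝ):ℂ))⁻¹ * ((Real.sqrt 2:ℝ):ℂ)⁻¹ * 2 = 1 by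
    rw [← mul_inv, sqrt2_sq]; norm_num]
  simp

lemma had_unitary : Had ∈ Matrix.unitaryGroup (Fin 2) ℂ := by
  rw [Matrix.mem_unitaryGroup_iff]
  rw [star_eq_conjTranspose, hadH, hadsq]

lemma hXH : Had * PauliX 2 * Hadᴴ = PauliZ 2 := by
  rw [hadH, pauliX2, pauliZ2, Had]
  rw [Matrix.smul_mul, Matrix.mul_smul, Matrix.smul_mul, smul_smul]
  rw [show !![(1:ℂ), 1; 1, -1] * !![0, 1; 1, 0] * !![1, 1; 1, -1] = (2:ℂ) • !![1, 0; 0, -1] by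
    ext i j; fin_cases i <;> fin_cases j <;> simp [Matrix.mul_apply, Fin.sum_univ_two] <;> norm_num]
  rw [smul_smul, show (((Real.sqrt 2:ℝ):ℂ))⁻¹ * ((Real.sqrt 2:ℝ):ℂ)⁻¹ * 2 = 1 by
    rw [← mul_inv, sqrt2_sq]; norm_num]
  simp

lemma hZH : Had * PauliZ 2 * Hadᴴ = PauliX 2 := by
  rw [hadH, pauliX2, pauliZ2, Had]
  rw [Matrix.smul_mul, Matrix.mul_smul, Matrix.smul_mul, smul_smul]
  rw [show !![(1:ℂ), 1; 1, -1] * !![1, 0; 0, -1] * !![1, 1; 1, -1] = (2:ℂ) • !![0, 1; 1, 0] by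
    ext i j; fin_cases i <;> fin_cases j <;> simp [Matrix.mul_apply, Fin.sum_univ_two] <;> norm_num]
  rw [smul_smul, show (((Real.sqrt 2:ℝ):ℂ))⁻¹ * ((Real.sqrt 2:ℝ):ℂ)⁻¹ * 2 = 1 by
    rw [← mul_inv, sqrt2_sq]; norm_num]
  simp

lemma hXZH : Had * (PauliX 2 * PauliZ 2) * Hadᴴ = (-1 : ℂ) • (PauliX 2 * PauliZ 2) := by
  rw [hadH, pauliX2, pauliZ2, Had]
  rw [show !![(0:ℂ),1;1,0] * !![1,0;0,-1] = !![0,-1;1,0] by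
    ext i j; fin_cases i <;> fin_cases j <;> simp [Matrix.mul_apply, Fin.sum_univ_two]]
  rw [Matrix.smul_mul, Matrix.mul_smul, Matrix.smul_mul, smul_smul]
  rw [show !![(1:ℂ), 1; 1, -1] * !![0, -1; 1, 0] * !![1, 1; 1, -1] = (2:ℂ) • !![0, 1; -1, 0] by
    ext i j; fin_cases i <;> fin_cases j <;> simp [Matrix.mul_apply, Fin.sum_univ_two] <;> norm_num]
  rw [smul_smul, show (((Real.sqrt 2:ℝ):ℂ))⁻¹ * ((Real.sqrt 2:ℝ):ℂ)⁻¹ * 2 = 1 by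
    rw [← mul_inv, sqrt2_sq]; norm_num]
  ext i j; fin_cases i <;> fin_cases j <;> simp

lemma clifford2_had : IsClifford 2 Had := by
  refine ⟨had_unitary, ?_⟩
  rintro M ⟨a, b, lam, hl, rfl⟩
  have hX2 : PauliX 2 ^ 2 = 1 := by
    rw [pauliX2]; ext i j; fin_cases i <;> fin_cases j <;>
      simp [pow_two, Matrix.mul_apply, Fin.sum_univ_two, Matrix.one_apply]
  have hZ2 : PauliZ 2 ^ 2 = 1 := by
    rw [pauliZ2]; ext i j; fin_cases i <;> fin_cases j <;>
      simp [pow_two, Matrix.mul_apply, Fin.sum_univ_two, Matrix.one_apply]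
  have hred : ∀ (P : Matrix (Fin 2) (Fin 2) ℂ), P ^ 2 = 1 → ∀ n : ℕ, P ^ n = P ^ (n % 2) := by
    intro P hP n
    conv_lhs => rw [← Nat.mod_add_div n 2]
    rw [pow_add, pow_mul, hP, one_pow, mul_one]
  have key : ∀ (P Q : Matrix (Fin 2) (Fin 2) ℂ) (μ : ℂ), Had * P * Hadᴴ = μ • Q →
      Had * (lam • P) * Hadᴴ = (lam * μ) • Q := by
    intro P Q μ h
    rw [Matrix.mul_smul, Matrix.smul_mul, h, smul_smul]
  rw [hred _ hX2 a, hred _ hZ2 b]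
  rcases Nat.mod_two_eq_zero_or_one a with ha | ha <;>
    rcases Nat.mod_two_eq_zero_or_one b with hb | hb <;> rw [ha, hb]
  · exact ⟨0, 0, lam, hl, by
      rw [key _ _ 1 (by simp only [pow_zero, mul_one, one_smul]; rw [hadH, hadsq]), mul_one]; simp⟩
  · exact ⟨1, 0, lam, hl, by
      rw [key _ _ 1 (by simp only [pow_zero, pow_one, one_mul, one_smul, mul_one]; exact hZH),
        mul_one]; simp⟩
  · exact ⟨0, 1, lam, hl, by
      rw [key _ _ 1 (by simp only [pow_zero, pow_one, one_mul, one_smul, mul_one]; exact hXH),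
        mul_one]; simp⟩
  · exact ⟨1, 1, lam * (-1), by simp [hl], by
      rw [key _ _ (-1) (by simp only [pow_one]; exact hXZH)]; simp⟩

noncomputable def Rmat : Matrix (Fin 3) (Fin 3) ℂ :=
  !![1/2, ((Real.sqrt 2 : ℂ))⁻¹, 1/2;
     ((Real.sqrt 2 : ℂ))⁻¹, 0, -((Real.sqrt 2 : ℂ))⁻¹;
     1/2, -((Real.sqrt 2 : ℂ))⁻¹, 1/2]

lemma e00 : (Rmat * PauliZ 3 * Rmatᴴ) 0 0 = omega 3 / 4 := by
  simp [Rmat, PauliZ, Matrix.mul_apply, Fin.sum_univ_three, Matrix.conjTranspose_apply,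
    Matrix.diagonal_apply, Matrix.vecMul_diagonal, map_ofNat]
  field_simp [sqrt2_ne]
  linear_combination (8:ℂ)*omega3_sum + (4 - 4*omega 3 + 4*omega 3^2)*sqrt2_sq

lemma e01 : (Rmat * PauliZ 3 * Rmatᴴ) 0 1
    = ((Real.sqrt 2 : ℂ))⁻¹ * (1 - omega 3 ^ 2) / 2 := by
  simp [Rmat, PauliZ, Matrix.mul_apply, Fin.sum_univ_three, Matrix.conjTranspose_apply,
    Matrix.diagonal_apply, Matrix.vecMul_diagonal, map_ofNat]
  field_simp [sqrt2_ne]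
  ring

open Fin.NatCast in
lemma notClifford : ¬ IsClifford 3 Rmat := by
  rintro ⟨-, h⟩
  have hZ : PauliZ 3 ∈ PauliSet 3 := ⟨0, 1, 1, by simp, by simp⟩
  obtain ⟨a, b, lam, hl, hEq⟩ := h (PauliZ 3) hZ
  have hlam : lam ≠ 0 := by
    intro h0; rw [h0] at hl; simp at hl
  have hdiag : PauliZ 3 ^ b = Matrix.diagonal fun s : Fin 3 => (omega 3 ^ (s : ℕ)) ^ b := by
    simp only [PauliZ]
    rw [Matrix.diagonal_pow]
    rfl
  have h00 : (Rmat * PauliZ 3 * Rmatᴴ) 0 0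
      = lam * ((if (0 : Fin 3) = (a : Fin 3) then 1 else 0)
          * ((omega 3 ^ ((0:Fin 3) : ℕ)) ^ b)) := by
    rw [hEq, pauliX_pow, hdiag]
    simp [Matrix.mul_diagonal]
  have h01 : (Rmat * PauliZ 3 * Rmatᴴ) 0 1
      = lam * ((if (0 : Fin 3) = 1 + (a : Fin 3) then 1 else 0)
          * ((omega 3 ^ ((1:Fin 3) : ℕ)) ^ b)) := by
    rw [hEq, pauliX_pow, hdiag]
    simp [Matrix.mul_diagonal]
  have hne00 : (Rmat * PauliZ 3 * Rmatᴴ) 0 0 ≠ 0 := by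
    rw [e00]
    simp [omega3_ne_zero]
  have hne01 : (Rmat * PauliZ 3 * Rmatᴴ) 0 1 ≠ 0 := by
    rw [e01]
    refine div_ne_zero (mul_ne_zero (inv_ne_zero sqrt2_ne) ?_) two_ne_zero
    intro h'
    exact omega3_sq_ne_one (by linear_combination -h')
  rw [h00] at hne00
  rw [h01] at hne01
  by_cases hC0 : (0 : Fin 3) = (a : Fin 3)
  · by_cases hC1 : (0 : Fin 3) = 1 + (a : Fin 3)
    · rw [← hC0, add_zero] at hC1
      exact absurd hC1 (by decide)
    · simp [hC1] at hne01
  · simp [hC0] at hne00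

lemma intertwine : ∀ i : Fin 3, (Matrix.kroneckerMap (· * ·) Had Had) *ᵥ symBasis i
    = ∑ j : Fin 3, Rmat j i • symBasis j := by
  intro i
  fin_cases i <;> funext p <;> obtain ⟨p1, p2⟩ := p <;> fin_cases p1 <;> fin_cases p2 <;>
    simp [Had, symBasis, Rmat, Matrix.mulVec, dotProduct, Fintype.sum_prod_type,
      Fin.sum_univ_two, Fin.sum_univ_three, Matrix.kroneckerMap_apply, Pi.single_apply,
      Prod.ext_iff, Matrix.vecHead, Matrix.vecTail] <;>
    field_simp [sqrt2_ne] <;>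
    first
      | linear_combination -sqrt2_sq
      | linear_combination sqrt2_sq
      | linear_combination ((Real.sqrt 2 : ℝ) : ℂ) * sqrt2_sq
      | linear_combination -((Real.sqrt 2 : ℝ) : ℂ) * sqrt2_sq
      | ring

end Aux

/-- It is false that for every pair of single-qubit Clifford operators `C₁, C₂`, the
restriction of `C₁ ⊗ C₂` to the symmetric subspace of `C² ⊗ C²` is a (3-dimensional)
Clifford operator; a counterexample is `C₁ = C₂ = H` (the Hadamard gate). -/
theorem stmt17 :
    (¬ ∀ C₁ C₂ : Matrix (Fin 2) (Fin 2) ℂ, IsClifford 2 C₁ → IsClifford 2 C₂ →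
      ∀ R : Matrix (Fin 3) (Fin 3) ℂ,
        (∀ i : Fin 3, (Matrix.kroneckerMap (· * ·) C₁ C₂) *ᵥ symBasis i
            = ∑ j : Fin 3, R j i • symBasis j) →
        IsClifford 3 R) ∧
    IsClifford 2 Had ∧
    ∃ R : Matrix (Fin 3) (Fin 3) ℂ,
      (∀ i : Fin 3, (Matrix.kroneckerMap (· * ·) Had Had) *ᵥ symBasis i
          = ∑ j : Fin 3, R j i • symBasis j) ∧
      ¬ IsClifford 3 R := by
  refine ⟨?_, clifford2_had, Rmat, intertwine, notClifford⟩
  intro h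
  exact notClifford (h Had Had clifford2_had clifford2_had Rmat intertwine)
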